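/- Let Q be a 2×2 matrix with rational entries, Q ≠ 0. Write Q = (p/q)·Q̃ where p/q is the GCD of the entries of Q in lowest terms (q ∈ ℕ, q > 0, gcd(p,q)=1) and Q̃ is an integer matrix whose entries have gcd 1. Then the subgroup L = { v ∈ ℤ² : Q·v ∈ ℤ² } has finite index in ℤ², and this index equals q² / gcd(q, |det Q̃|). -/

import Mathlib

open Matrix

/-- The subgroup of integer vectors `v` with `Q·v` integral. -/
def intLattice (Q : Matrix (Fin 2) (Fin 2) ℚ) : AddSubgroup (Fin 2 → ℤ) where
  carrier := {v | ∀ i, ∃ n : ℤ, Q.mulVec (fun j => (v j : ℚ)) i = n}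
  zero_mem' := by
    intro i
    exact ⟨0, by simp [Matrix.mulVec]⟩
  add_mem' := by
    intro u v hu hv i
    obtain ⟨m, hm⟩ := hu i
    obtain ⟨n, hn⟩ := hv i
    refine ⟨m + n, ?_⟩
    have h : (fun j => (((u + v) j : ℤ) : ℚ)) = (fun j => ((u j : ℤ) : ℚ)) + fun j => ((v j : ℤ) : ℚ) := by
      funext j; simp
    rw [h, Matrix.mulVec_add, Pi.add_apply, hm, hn]
    push_cast; ring
  neg_mem' := by
    intro v hv i
    obtain ⟨n, hn⟩ := hv i
    refine ⟨-n, ?_⟩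
    have h : (fun j => (((-v) j : ℤ) : ℚ)) = -fun j => ((v j : ℤ) : ℚ) := by
      funext j; simp
    rw [h, Matrix.mulVec_neg, Pi.neg_apply, hn]
    push_cast; ring

/-- Gcd of the entries of a 2×2 integer matrix. -/
def entriesGcd (M : Matrix (Fin 2) (Fin 2) ℤ) : ℕ :=
  Nat.gcd (Nat.gcd (M 0 0).natAbs (M 0 1).natAbs) (Nat.gcd (M 1 0).natAbs (M 1 1).natAbs)


lemma card_ker_mulLeft (n : ℕ) (hn : n ≠ 0) (D : ℤ) :
    Nat.card {x : ZMod n // (D : ZMod n) * x = 0} = Nat.gcd n D.natAbs := by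
  haveI : NeZero n := ⟨hn⟩
  set f : ZMod n →+ ZMod n := AddMonoidHom.mulLeft (D : ZMod n) with hf
  have hker : Nat.card {x : ZMod n // (D : ZMod n) * x = 0} = Nat.card f.ker := by
    apply Nat.card_congr
    exact Equiv.subtypeEquivRight (fun x => by simp [hf, AddMonoidHom.mem_ker])
  have hrange : (f.range : AddSubgroup (ZMod n)) = AddSubgroup.zmultiples (D : ZMod n) := by
    ext y
    simp only [AddMonoidHom.mem_range, AddSubgroup.mem_zmultiples_iff]
    constructor
    · rintro ⟨x, rfl⟩
      obtain ⟨k, rfl⟩ := ZMod.intCast_surjective x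
      exact ⟨k, by simp [hf, zsmul_eq_mul, mul_comm]⟩
    · rintro ⟨k, rfl⟩
      exact ⟨(k : ZMod n), by simp [hf, zsmul_eq_mul, mul_comm]⟩
  have hcr : Nat.card f.range = n / Nat.gcd n D.natAbs := by
    rw [hrange, Nat.card_zmultiples]
    rcases Int.natAbs_eq D with h | h
    · rw [h, Int.cast_natCast]; exact ZMod.addOrderOf_coe _ hn
    · rw [h, Int.cast_neg, Int.cast_natCast, addOrderOf_neg]
      simp only [Int.natAbs_neg, Int.natAbs_natCast]
      exact ZMod.addOrderOf_coe _ hn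
  have hgdvd : Nat.gcd n D.natAbs ∣ n := Nat.gcd_dvd_left _ _
  have htot : Nat.card (ZMod n) = Nat.card (ZMod n ⧸ f.ker) * Nat.card f.ker :=
    AddSubgroup.card_eq_card_quotient_mul_card_addSubgroup f.ker
  have hq : Nat.card (ZMod n ⧸ f.ker) = Nat.card f.range :=
    Nat.card_congr (QuotientAddGroup.quotientKerEquivRange f).toEquiv
  rw [Nat.card_zmod, hq, hcr] at htot
  rw [hker]
  have hpos : 0 < n / Nat.gcd n D.natAbs := Nat.div_pos (Nat.le_of_dvd (Nat.pos_of_ne_zero hn) hgdvd) (Nat.pos_of_ne_zero (fun h => hn (by simpa [h] using hgdvd)))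
  have h2 : n = (n / Nat.gcd n D.natAbs) * Nat.gcd n D.natAbs := (Nat.div_mul_cancel hgdvd).symm
  exact Nat.eq_of_mul_eq_mul_left hpos (htot.symm.trans h2)


noncomputable def kerCard (n : ℕ) (A : Matrix (Fin 2) (Fin 2) ℤ) : ℕ :=
  Nat.card {x : Fin 2 → ZMod n // A.map (Int.cast : ℤ → ZMod n) *ᵥ x = 0}

lemma fin2_other {k j : Fin 2} (h : k ≠ j) : k = j + 1 := by
  fin_cases k <;> fin_cases j <;> first | rfl | (exfalso; exact h rfl) | decide

lemma fin2_succ_ne (j : Fin 2) : j + 1 ≠ j := by fin_cases j <;> decide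

lemma fin2_forall (i : Fin 2) (P : Fin 2 → Prop) : (∀ k, P k) ↔ P i ∧ P (i + 1) := by
  fin_cases i <;> simp [Fin.forall_fin_two] <;> tauto

lemma mulVec2 {R : Type*} [CommRing R] (M : Matrix (Fin 2) (Fin 2) R) (x : Fin 2 → R)
    (k j : Fin 2) : (M *ᵥ x) k = M k j * x j + M k (j + 1) * x (j + 1) := by
  fin_cases j <;> simp [Matrix.mulVec, dotProduct, Fin.sum_univ_two] <;> ring

lemma det_pos2 (A : Matrix (Fin 2) (Fin 2) ℤ) (i j : Fin 2) :
    A i j * A (i+1) (j+1) - A i (j+1) * A (i+1) j = A.det ∨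
    A i j * A (i+1) (j+1) - A i (j+1) * A (i+1) j = -A.det := by
  fin_cases i <;> fin_cases j <;> simp [Matrix.det_fin_two] <;> ring_nf <;> tauto

lemma kerCard_of_isUnit (n : ℕ) [NeZero n] (A : Matrix (Fin 2) (Fin 2) ℤ) {i j : Fin 2}
    (h : IsUnit ((A i j : ZMod n))) :
    kerCard n A = Nat.gcd n A.det.natAbs := by
  classical
  obtain ⟨u, hu⟩ := h
  have huu : (↑u : ZMod n) * ↑u⁻¹ = 1 := u.mul_inv
  set a : ZMod n := ((A i j : ℤ) : ZMod n) with ha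
  set b : ZMod n := ((A i (j+1) : ℤ) : ZMod n) with hb
  set c : ZMod n := ((A (i+1) j : ℤ) : ZMod n) with hc
  set e : ZMod n := ((A (i+1) (j+1) : ℤ) : ZMod n) with he
  set D : ZMod n := ((A.det : ℤ) : ZMod n) with hD
  have hd' : a * e - b * c = D ∨ a * e - b * c = -D := by
    rcases det_pos2 A i j with hs | hs
    · left
      have h2 := congrArg (fun t : ℤ => (t : ZMod n)) hs
      simp only [Int.cast_sub, Int.cast_mul] at h2
      exact h2
    · right
      have h2 := congrArg (fun t : ℤ => (t : ZMod n)) hs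
      simp only [Int.cast_sub, Int.cast_mul, Int.cast_neg] at h2
      exact h2
  have hiffD : ∀ y : ZMod n, (a * e - b * c) * y = 0 ↔ D * y = 0 := by
    intro y
    rcases hd' with hs | hs
    · rw [hs]
    · rw [hs]; simp [neg_mul, neg_eq_zero]
  have hmem : ∀ x : Fin 2 → ZMod n, (A.map (Int.cast : ℤ → ZMod n) *ᵥ x = 0) ↔
      (a * x j + b * x (j+1) = 0 ∧ c * x j + e * x (j+1) = 0) := by
    intro x
    rw [funext_iff, fin2_forall i]
    simp only [Pi.zero_apply, mulVec2 _ x i j, mulVec2 _ x (i+1) j, Matrix.map_apply]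
    exact Iff.rfl
  have E : {x : Fin 2 → ZMod n // A.map (Int.cast : ℤ → ZMod n) *ᵥ x = 0} ≃
      {y : ZMod n // D * y = 0} := by
    refine ⟨fun x => ⟨x.1 (j+1), ?_⟩, fun y => ⟨fun k => if k = j then -(↑u⁻¹ * b * y.1) else y.1, ?_⟩, ?_, ?_⟩
    · obtain ⟨h1, h2⟩ := (hmem x.1).mp x.2
      rw [← hiffD]
      linear_combination a * h2 - c * h1
    · have hd'y : (a * e - b * c) * y.1 = 0 := (hiffD y.1).mpr y.2
      rw [← hu] at hd'y
      refine (hmem _).mpr ⟨?_, ?_⟩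
      · simp only [if_pos rfl, if_neg (fin2_succ_ne j), if_true]
        rw [← hu]
        linear_combination (-(b * y.1)) * huu
      · simp only [if_pos rfl, if_neg (fin2_succ_ne j), if_true]
        linear_combination (↑u⁻¹ : ZMod n) * hd'y - e * y.1 * huu
    · rintro ⟨x, hx⟩
      obtain ⟨h1, h2⟩ := (hmem x).mp hx
      rw [← hu] at h1
      apply Subtype.ext
      funext k
      show (if k = j then -(↑u⁻¹ * b * x (j+1)) else x (j+1)) = x k
      by_cases hk : k = j
      · rw [if_pos hk, hk]
        linear_combination (-(↑u⁻¹ : ZMod n)) * h1 + x j * huu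
      · rw [if_neg hk, fin2_other hk]
    · rintro ⟨y, hy⟩
      apply Subtype.ext
      exact if_neg (fin2_succ_ne j)
  rw [kerCard, Nat.card_congr E]
  exact card_ker_mulLeft n (NeZero.ne n) A.det




lemma gcd_mul_coprime {a b : ℕ} (k : ℕ) (h : Nat.Coprime a b) :
    Nat.gcd (a * b) k = Nat.gcd a k * Nat.gcd b k := by
  apply Nat.dvd_antisymm
  · have h1 : gcd k (a * b) ∣ gcd k a * gcd k b := gcd_mul_dvd_mul_gcd k a b
    simpa [gcd_eq_nat_gcd, Nat.gcd_comm k] using h1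
  · have hcop : Nat.Coprime (Nat.gcd a k) (Nat.gcd b k) :=
      Nat.Coprime.coprime_dvd_right (Nat.gcd_dvd_left b k)
        (Nat.Coprime.coprime_dvd_left (Nat.gcd_dvd_left a k) h)
    exact Nat.dvd_gcd (mul_dvd_mul (Nat.gcd_dvd_left a k) (Nat.gcd_dvd_left b k))
      (hcop.mul_dvd_of_dvd_of_dvd (Nat.gcd_dvd_right a k) (Nat.gcd_dvd_right b k))

lemma kerCard_mul (m k : ℕ) (h : Nat.Coprime m k) (A : Matrix (Fin 2) (Fin 2) ℤ) :
    kerCard (m * k) A = kerCard m A * kerCard k A := by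
  set e := ZMod.chineseRemainder h with he
  have key : ∀ (x : Fin 2 → ZMod (m * k)) (i : Fin 2),
      e ((A.map (Int.cast : ℤ → ZMod (m * k)) *ᵥ x) i)
        = ((A.map (Int.cast : ℤ → ZMod m) *ᵥ fun l => (e (x l)).1) i,
           (A.map (Int.cast : ℤ → ZMod k) *ᵥ fun l => (e (x l)).2) i) := by
    intro x i
    simp only [Matrix.mulVec, dotProduct, Fin.sum_univ_two, Matrix.map_apply,
      _root_.map_add, _root_.map_mul, map_intCast, Prod.mk_add_mk, Prod.ext_iff, Prod.fst_add, Prod.snd_add,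
      Prod.fst_mul, Prod.snd_mul, Prod.fst_intCast, Prod.snd_intCast]
    exact ⟨trivial, trivial⟩
  have hiff : ∀ x : Fin 2 → ZMod (m * k), (A.map (Int.cast : ℤ → ZMod (m * k)) *ᵥ x = 0) ↔
      ((A.map (Int.cast : ℤ → ZMod m) *ᵥ fun l => (e (x l)).1) = 0 ∧
       (A.map (Int.cast : ℤ → ZMod k) *ᵥ fun l => (e (x l)).2) = 0) := by
    intro x
    rw [funext_iff, funext_iff, funext_iff, ← forall_and]
    apply forall_congr'
    intro i
    rw [Pi.zero_apply, Pi.zero_apply, Pi.zero_apply,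
      ← EmbeddingLike.map_eq_zero_iff (f := e), key x i, Prod.mk_eq_zero]
  have E : {x : Fin 2 → ZMod (m * k) // A.map (Int.cast : ℤ → ZMod (m * k)) *ᵥ x = 0} ≃
      {x : Fin 2 → ZMod m // A.map (Int.cast : ℤ → ZMod m) *ᵥ x = 0} ×
      {x : Fin 2 → ZMod k // A.map (Int.cast : ℤ → ZMod k) *ᵥ x = 0} := by
    refine (Equiv.subtypeEquiv ((Equiv.piCongrRight fun _ => e.toEquiv).trans
      (Equiv.arrowProdEquivProdArrow _ _ _)) ?_).trans Equiv.subtypeProdEquivProd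
    intro x
    exact hiff x
  rw [kerCard, Nat.card_congr E, Nat.card_prod]
  rfl

lemma kerCard_eq_gcd (A : Matrix (Fin 2) (Fin 2) ℤ) (hA : entriesGcd A = 1) :
    ∀ n : ℕ, n ≠ 0 → kerCard n A = Nat.gcd n A.det.natAbs := by
  intro n
  induction n using Nat.recOnPosPrimePosCoprime with
  | prime_pow p kk hpp hkk =>
    intro _
    have hprime : Nat.Prime p := hpp
    have hex : ∃ i j : Fin 2, ¬ (p ∣ (A i j).natAbs) := by
      by_contra hcon
      push_neg at hcon
      have hd : p ∣ 1 := hA ▸ (Nat.dvd_gcd (Nat.dvd_gcd (hcon 0 0) (hcon 0 1))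
        (Nat.dvd_gcd (hcon 1 0) (hcon 1 1)))
      exact hprime.ne_one (Nat.dvd_one.mp hd)
    obtain ⟨i, j, hij⟩ := hex
    have hcop : Nat.Coprime (A i j).natAbs (p ^ kk) :=
      (((Nat.Prime.coprime_iff_not_dvd hprime).mpr hij).symm).pow_right kk
    haveI : NeZero (p ^ kk) := ⟨pow_ne_zero kk hprime.ne_zero⟩
    have hunit : IsUnit (((A i j : ℤ)) : ZMod (p ^ kk)) := by
      rcases Int.natAbs_eq (A i j) with hh | hh
      · rw [hh, Int.cast_natCast]; exact (ZMod.isUnit_iff_coprime _ _).mpr hcop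
      · rw [hh, Int.cast_neg, Int.cast_natCast]
        exact ((ZMod.isUnit_iff_coprime _ _).mpr hcop).neg
    exact kerCard_of_isUnit _ A hunit
  | zero => intro h; exact absurd rfl h
  | one =>
    intro _
    rw [Nat.gcd_one_left, kerCard]
    apply Nat.card_eq_one_iff_unique.mpr
    constructor
    · exact ⟨fun a b => Subtype.ext (Subsingleton.elim _ _)⟩
    · exact ⟨⟨0, Matrix.mulVec_zero _⟩⟩
  | coprime a b ha hb hab iha ihb =>
    intro _
    rw [kerCard_mul a b hab, iha (by omega), ihb (by omega), gcd_mul_coprime _ hab]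

theorem index_intLattice (Q : Matrix (Fin 2) (Fin 2) ℚ) (hQ : Q ≠ 0)
    (p : ℤ) (q : ℕ) (hq : 0 < q) (hpq : Nat.gcd p.natAbs q = 1)
    (Qt : Matrix (Fin 2) (Fin 2) ℤ)
    (hfac : Q = ((p : ℚ) / (q : ℚ)) • Qt.map (Int.cast : ℤ → ℚ))
    (hprim : entriesGcd Qt = 1) :
    (intLattice Q).index ≠ 0 ∧
    (intLattice Q).index = q ^ 2 / Nat.gcd q Qt.det.natAbs := by
  haveI : NeZero q := ⟨hq.ne'⟩
  set ψ : (Fin 2 → ZMod q) →+ (Fin 2 → ZMod q) :=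
    ((Qt.map (Int.cast : ℤ → ZMod q)).mulVecLin).toAddMonoidHom with hψ
  set π : (Fin 2 → ℤ) →+ (Fin 2 → ZMod q) :=
    { toFun := fun v => fun jj => ((v jj : ℤ) : ZMod q),
      map_zero' := by funext jj; simp,
      map_add' := by intro u v; funext jj; push_cast; simp } with hπ
  set φ : (Fin 2 → ℤ) →+ (Fin 2 → ZMod q) := ψ.comp π with hφdef
  have hφ : ∀ (v : Fin 2 → ℤ) (i : Fin 2), φ v i = (((Qt *ᵥ v) i : ℤ) : ZMod q) := by
    intro v i
    show ((Qt.map (Int.cast : ℤ → ZMod q)) *ᵥ (fun jj => ((v jj : ℤ) : ZMod q))) i = _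
    exact (RingHom.map_mulVec (Int.castRingHom (ZMod q)) Qt v i).symm
  have hQv : ∀ (v : Fin 2 → ℤ) (i : Fin 2),
      Q.mulVec (fun jj => ((v jj : ℤ) : ℚ)) i = ((p : ℚ)/(q : ℚ)) * (((Qt *ᵥ v) i : ℤ) : ℚ) := by
    intro v i
    rw [hfac, Matrix.smul_mulVec, Pi.smul_apply, smul_eq_mul]
    congr 1
    exact (RingHom.map_mulVec (Int.castRingHom ℚ) Qt v i).symm
  have hq0 : (q : ℚ) ≠ 0 := Nat.cast_ne_zero.mpr hq.ne'
  have hdvd : ∀ w : ℤ, (∃ n : ℤ, ((p:ℚ)/(q:ℚ)) * (w : ℚ) = n) ↔ (q : ℤ) ∣ w := by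
    intro w
    constructor
    · rintro ⟨n, hn⟩
      have hrat : (p : ℚ) * w = n * q := by field_simp at hn; linarith
      have hint : p * w = n * q := by exact_mod_cast hrat
      have hdvd1 : (q : ℤ) ∣ p * w := ⟨n, by rw [hint]; ring⟩
      refine Int.dvd_of_dvd_mul_right_of_gcd_one hdvd1 ?_
      simp only [Int.gcd, Int.natAbs_natCast]
      rw [Nat.gcd_comm]
      exact hpq
    · rintro ⟨c, rfl⟩
      refine ⟨p * c, ?_⟩
      push_cast
      field_simp
  have hker : intLattice Q = φ.ker := by
    ext v
    have hmem : v ∈ intLattice Q ↔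
        (∀ i, ∃ n : ℤ, Q.mulVec (fun jj => ((v jj : ℤ) : ℚ)) i = n) := Iff.rfl
    rw [hmem, AddMonoidHom.mem_ker, funext_iff]
    apply forall_congr'
    intro i
    rw [Pi.zero_apply, hφ v i, ZMod.intCast_zmod_eq_zero_iff_dvd, ← hdvd ((Qt *ᵥ v) i)]
    apply exists_congr
    intro n
    rw [hQv v i]
  have h1 : (intLattice Q).index = Nat.card φ.range := by
    rw [hker]; exact AddSubgroup.index_ker φ
  have hπsurj : Function.Surjective π := by
    intro w
    choose g hg using fun i => ZMod.intCast_surjective (w i)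
    exact ⟨g, funext hg⟩
  have hrange : φ.range = ψ.range := by
    ext w
    constructor
    · rintro ⟨v, rfl⟩; exact ⟨π v, rfl⟩
    · rintro ⟨x, rfl⟩
      obtain ⟨v, rfl⟩ := hπsurj x
      exact ⟨v, rfl⟩
  have hcard : Nat.card (Fin 2 → ZMod q) = q ^ 2 := by
    rw [Nat.card_pi]
    simp [Nat.card_zmod, sq]
  have h2 : Nat.card ψ.range * Nat.card ψ.ker = q ^ 2 := by
    have ht := AddSubgroup.card_eq_card_quotient_mul_card_addSubgroup ψ.ker
    rw [Nat.card_congr (QuotientAddGroup.quotientKerEquivRange ψ).toEquiv, hcard] at ht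
    exact ht.symm
  have h3 : Nat.card ψ.ker = kerCard q Qt := by
    rw [kerCard]
    apply Nat.card_congr
    exact Equiv.subtypeEquivRight (fun x => by
      simp [AddMonoidHom.mem_ker, hψ, Matrix.mulVecLin_apply])
  have h4 : kerCard q Qt = Nat.gcd q Qt.det.natAbs := kerCard_eq_gcd Qt hprim q hq.ne'
  have hgpos : 0 < Nat.gcd q Qt.det.natAbs := Nat.gcd_pos_of_pos_left _ hq
  have h5 : (intLattice Q).index * Nat.gcd q Qt.det.natAbs = q ^ 2 := by
    rw [h1, hrange, ← h4, ← h3]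
    exact h2
  have hq2 : q ^ 2 ≠ 0 := pow_ne_zero _ hq.ne'
  constructor
  · intro h0
    rw [h0, zero_mul] at h5
    exact hq2 h5.symm
  · exact (Nat.div_eq_of_eq_mul_left hgpos h5.symm).symm
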